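/- Let α ∈ (0, 1/2) and define f(x) = -(log(6/x))^α for x ∈ (0,2). Then the Gagliardo H^{1/2}-seminorm of f on the interval (0,2) is finite, i.e. the double integral ∫₀² ∫₀² (f(x) - f(y))² / (x - y)² dx dy is finite. -/

import Mathlib

open MeasureTheory Set

-- (log u)^2 ≤ 16 √u for u ≥ 1
lemma aux_log_sq_le {u : ℝ} (hu : 1 ≤ u) : (Real.log u)^2 ≤ 16 * u ^ (1/2 : ℝ) := by
  have hu0 : (0:ℝ) < u := by linarith
  have h1 : (0:ℝ) < u ^ ((4:ℝ)⁻¹) := Real.rpow_pos_of_pos hu0 _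
  have h1' : (1:ℝ) ≤ u ^ ((4:ℝ)⁻¹) := Real.one_le_rpow hu (by norm_num)
  have h4 : Real.log u = 4 * Real.log (u ^ ((4:ℝ)⁻¹)) := by
    rw [Real.log_rpow hu0]; ring
  have h2 : Real.log (u ^ ((4:ℝ)⁻¹)) ≤ u ^ ((4:ℝ)⁻¹) :=
    (Real.log_le_sub_one_of_pos h1).trans (by linarith)
  have h0 : 0 ≤ Real.log (u ^ ((4:ℝ)⁻¹)) := Real.log_nonneg h1'
  have hsq : (u ^ ((4:ℝ)⁻¹))^2 = u ^ (1/2 : ℝ) := by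
    rw [← Real.rpow_natCast (u ^ ((4:ℝ)⁻¹)) 2, ← Real.rpow_mul hu0.le]
    norm_num
  calc (Real.log u)^2 = 16 * (Real.log (u ^ ((4:ℝ)⁻¹)))^2 := by rw [h4]; ring
  _ ≤ 16 * (u ^ ((4:ℝ)⁻¹))^2 := by nlinarith
  _ = 16 * u ^ (1/2:ℝ) := by rw [hsq]

-- (log u)^2 ≤ 4 (u-1)^2 for 1/2 ≤ u ≤ 2
lemma aux_log_sq_near {u : ℝ} (h1 : 1/2 ≤ u) (h2 : u ≤ 2) : (Real.log u)^2 ≤ 4 * (u-1)^2 := by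
  have hu0 : (0:ℝ) < u := by linarith
  have ha : Real.log u ≤ u - 1 := Real.log_le_sub_one_of_pos hu0
  have hb : Real.log u⁻¹ ≤ u⁻¹ - 1 := Real.log_le_sub_one_of_pos (by positivity)
  rw [Real.log_inv] at hb
  have hui : u⁻¹ - 1 = (1 - u)/u := by field_simp
  rw [hui] at hb
  -- -log u ≤ (1-u)/u ≤ 2(1-u) if u ≥ 1/2... (careful with sign of 1-u)
  rcases le_total 1 u with h | h
  · nlinarith [Real.log_nonneg h]
  · have h3 : Real.log u ≤ 0 := Real.log_nonpos hu0.le h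
    have h4 : (1 - u)/u ≤ 2*(1-u) := by
      rw [div_le_iff₀ hu0]; nlinarith
    nlinarith

-- concavity / MVT bound
lemma aux_rpow_sub_rpow {α a b : ℝ} (hα : 0 < α) (hα1 : α ≤ 1) (hb : 1 ≤ b) (hab : b ≤ a) :
    a ^ α - b ^ α ≤ α * b ^ (α - 1) * (a - b) := by
  rcases eq_or_lt_of_le hab with rfl | hlt
  · simp
  · have hb0 : (0:ℝ) < b := by linarith
    have hderiv : ∀ x ∈ Ioo b a, HasDerivAt (fun t : ℝ => t ^ α) (α * x ^ (α-1)) x := by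
      intro x hx
      have := Real.hasDerivAt_rpow_const (x := x) (p := α) (Or.inl (by linarith [hx.1] : x ≠ 0))
      simpa [mul_comm] using this
    have hcont : ContinuousOn (fun t : ℝ => t ^ α) (Icc b a) := by
      intro x hx
      exact (Real.continuousAt_rpow_const x α (Or.inl (by linarith [hx.1] : x ≠ 0))).continuousWithinAt
    obtain ⟨c, hc, hceq⟩ := exists_hasDerivAt_eq_slope (fun t : ℝ => t ^ α)
      (fun x => α * x ^ (α-1)) hlt hcont hderiv
    have hc0 : (0:ℝ) < c := by linarith [hc.1]
    have hle : c ^ (α-1) ≤ b ^ (α-1) :=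
      Real.rpow_le_rpow_of_nonpos hb0 hc.1.le (by linarith)
    rw [eq_div_iff (by linarith : a - b ≠ 0)] at hceq
    rw [← hceq]
    have hab' : (0:ℝ) ≤ a - b := by linarith
    exact mul_le_mul_of_nonneg_right (mul_le_mul_of_nonneg_left hle hα.le) hab' 

lemma aux_L_ge_one {x : ℝ} (hx0 : 0 < x) (hx2 : x ≤ 2) : 1 ≤ Real.log (6/x) := by
  have h3 : (3:ℝ) ≤ 6/x := by rw [le_div_iff₀ hx0]; nlinarith
  have he : Real.exp 1 ≤ 3 := by have := Real.exp_one_lt_d9; linarith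
  calc (1:ℝ) ≤ Real.log 3 := by rw [Real.le_log_iff_exp_le (by norm_num)]; exact he
  _ ≤ Real.log (6/x) := Real.log_le_log (by norm_num) h3


lemma aux_L_diff {x y : ℝ} (hx : (0:ℝ) < x) (hy : (0:ℝ) < y) :
    Real.log (6/y) - Real.log (6/x) = Real.log (x/y) := by
  rw [Real.log_div (by norm_num) hy.ne', Real.log_div (by norm_num) hx.ne',
    Real.log_div hx.ne' hy.ne']
  ring

lemma aux_ordered (α : ℝ) (hα : α ∈ Set.Ioo (0:ℝ) (1/2)) {x y : ℝ}
    (hx : x ∈ Ioo (0:ℝ) 2) (hy : y ∈ Ioo (0:ℝ) 2) (hyx : y ≤ x) :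
    (Real.log (6/y)) ^ α - (Real.log (6/x)) ^ α
      ≤ α * (Real.log (6/x)) ^ (α - 1) * Real.log (x/y) := by
  have hbx := aux_L_ge_one hx.1 hx.2.le
  have hby := aux_L_ge_one hy.1 hy.2.le
  have hab : Real.log (6/x) ≤ Real.log (6/y) := by
    have : Real.log (x/y) = Real.log (6/y) - Real.log (6/x) := (aux_L_diff hx.1 hy.1).symm
    have hl : 0 ≤ Real.log (x/y) := Real.log_nonneg (by
      rw [le_div_iff₀ hy.1]; linarith)
    linarith
  have := aux_rpow_sub_rpow hα.1 (by linarith [hα.2]) hbx hab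
  rwa [aux_L_diff hx.1 hy.1] at this

-- main pointwise bound
lemma aux_key (α : ℝ) (hα : α ∈ Set.Ioo (0:ℝ) (1/2)) {x y : ℝ}
    (hx : x ∈ Ioo (0:ℝ) 2) (hy : y ∈ Ioo (0:ℝ) 2) :
    ((-(Real.log (6/x)) ^ α) - (-(Real.log (6/y)) ^ α)) ^ 2 / (x - y) ^ 2
      ≤ (α * (Real.log (6/x)) ^ (α-1))^2 * ((Real.log (x/y))^2 / (x-y)^2)
        + (α * (Real.log (6/y)) ^ (α-1))^2 * ((Real.log (x/y))^2 / (x-y)^2) := by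
  rcases eq_or_ne x y with rfl | hne
  · simp
  have hxy0 : x - y ≠ 0 := sub_ne_zero.mpr hne
  have hd : (0:ℝ) < (x - y)^2 := by positivity
  rw [mul_div_assoc' , mul_div_assoc', ← add_div]
  rw [div_le_div_iff_of_pos_right hd]
  have h0α : 0 ≤ α := hα.1.le
  rcases le_total y x with hyx | hxy
  · have hord := aux_ordered α hα hx hy hyx
    have hmono : (Real.log (6/x)) ^ α ≤ (Real.log (6/y)) ^ α := by
      apply Real.rpow_le_rpow (by linarith [aux_L_ge_one hx.1 hx.2.le]) ?_ h0α
      have := aux_L_diff hx.1 hy.1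
      have hl : 0 ≤ Real.log (x/y) := Real.log_nonneg (by
        rw [le_div_iff₀ hy.1]; linarith)
      linarith
    have hM0 : 0 ≤ α * (Real.log (6/x)) ^ (α-1) * Real.log (x/y) := by
      have := hord; linarith [hmono]
    have hsq : ((-(Real.log (6/x)) ^ α) - (-(Real.log (6/y)) ^ α))^2
        = ((Real.log (6/y)) ^ α - (Real.log (6/x)) ^ α)^2 := by ring
    rw [hsq]
    have h2 : ((Real.log (6/y)) ^ α - (Real.log (6/x)) ^ α)^2
        ≤ (α * (Real.log (6/x)) ^ (α-1) * Real.log (x/y))^2 := by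
      nlinarith [hord, hmono]
    calc ((Real.log (6/y)) ^ α - (Real.log (6/x)) ^ α)^2
        ≤ (α * (Real.log (6/x)) ^ (α-1) * Real.log (x/y))^2 := h2
      _ = (α * (Real.log (6/x)) ^ (α-1))^2 * (Real.log (x/y))^2 := by ring
      _ ≤ _ := by nlinarith [sq_nonneg ((α * (Real.log (6/y)) ^ (α-1)) * Real.log (x/y))]
  · have hord := aux_ordered α hα hy hx hxy
    have hmono : (Real.log (6/y)) ^ α ≤ (Real.log (6/x)) ^ α := by
      apply Real.rpow_le_rpow (by linarith [aux_L_ge_one hy.1 hy.2.le]) ?_ h0α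
      have := aux_L_diff hy.1 hx.1
      have hl : 0 ≤ Real.log (y/x) := Real.log_nonneg (by
        rw [le_div_iff₀ hx.1]; linarith)
      linarith
    have hlogeq : (Real.log (y/x))^2 = (Real.log (x/y))^2 := by
      rw [Real.log_div hy.1.ne' hx.1.ne', Real.log_div hx.1.ne' hy.1.ne']; ring
    have hsq : ((-(Real.log (6/x)) ^ α) - (-(Real.log (6/y)) ^ α))^2
        = ((Real.log (6/x)) ^ α - (Real.log (6/y)) ^ α)^2 := by ring
    rw [hsq]
    have h2 : ((Real.log (6/x)) ^ α - (Real.log (6/y)) ^ α)^2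
        ≤ (α * (Real.log (6/y)) ^ (α-1) * Real.log (y/x))^2 := by
      nlinarith [hord, hmono]
    calc ((Real.log (6/x)) ^ α - (Real.log (6/y)) ^ α)^2
        ≤ (α * (Real.log (6/y)) ^ (α-1) * Real.log (y/x))^2 := h2
      _ = (α * (Real.log (6/y)) ^ (α-1))^2 * (Real.log (x/y))^2 := by
          rw [mul_pow]; rw [hlogeq]
      _ ≤ _ := by nlinarith [sq_nonneg ((α * (Real.log (6/x)) ^ (α-1)) * Real.log (x/y))]

lemma aux_inner {u : ℝ} (hu : u ∈ Ioo (0:ℝ) 2) :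
    ∫⁻ v in Ioo (0:ℝ) 2, ENNReal.ofReal ((Real.log (u/v))^2 / (u - v)^2)
      ≤ ENNReal.ofReal (300/u) := by
  obtain ⟨hu0, hu2⟩ := hu
  set k : ℝ → ℝ := fun v => (Real.log (u/v))^2 / (u - v)^2 with hk
  have hcover : Ioo (0:ℝ) 2 ⊆ (Ioc 0 (u/2) ∪ Ioo (u/2) (2*u)) ∪ Icc (2*u) 2 := by
    intro v hv
    rcases le_or_gt v (u/2) with h | h
    · exact Or.inl (Or.inl ⟨hv.1, h⟩)
    rcases lt_or_ge v (2*u) with h' | h'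
    · exact Or.inl (Or.inr ⟨h, h'⟩)
    · exact Or.inr ⟨h', hv.2.le⟩
  have step1 : ∫⁻ v in Ioo (0:ℝ) 2, ENNReal.ofReal (k v)
      ≤ (∫⁻ v in Ioc 0 (u/2), ENNReal.ofReal (k v))
        + (∫⁻ v in Ioo (u/2) (2*u), ENNReal.ofReal (k v))
        + (∫⁻ v in Icc (2*u) 2, ENNReal.ofReal (k v)) :=
    le_trans (lintegral_mono_set hcover) (le_trans (lintegral_union_le _ _ _)
      (add_le_add (lintegral_union_le _ _ _) le_rfl))
  -- Piece A
  have pieceA : ∫⁻ v in Ioc 0 (u/2), ENNReal.ofReal (k v) ≤ ENNReal.ofReal (128/u) := by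
    have hbd : ∀ v ∈ Ioc (0:ℝ) (u/2),
        ENNReal.ofReal (k v) ≤ ENNReal.ofReal (64 * u ^ (-(3/2) : ℝ) * v ^ (-(1/2) : ℝ)) := by
      intro v hv
      obtain ⟨hv0, hvu⟩ := hv
      apply ENNReal.ofReal_le_ofReal
      have h1 : (1:ℝ) ≤ u/v := by rw [le_div_iff₀ hv0]; linarith
      have hlog : (Real.log (u/v))^2 ≤ 16 * (u/v) ^ (1/2:ℝ) := aux_log_sq_le h1
      have hden : u^2/4 ≤ (u - v)^2 := by nlinarith
      have e1 : (u/v) ^ (1/2:ℝ) = u ^ (1/2:ℝ) * v ^ (-(1/2):ℝ) := by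
        rw [Real.div_rpow hu0.le hv0.le, Real.rpow_neg hv0.le, div_eq_mul_inv]
      have hkb : k v ≤ (16 * (u/v) ^ (1/2:ℝ)) / (u^2/4) := by
        apply div_le_div₀ (by positivity) hlog (by positivity) hden
      refine hkb.trans (le_of_eq ?_)
      rw [e1]
      have e2 : u ^ (-(3/2) : ℝ) = u ^ (1/2:ℝ) / u^2 := by
        rw [← Real.rpow_natCast u 2, ← Real.rpow_sub hu0]; norm_num
      rw [e2]; field_simp; ring
    refine le_trans (setLIntegral_mono' measurableSet_Ioc hbd) ?_
    have hInt : IntegrableOn (fun v : ℝ => 64 * u ^ (-(3/2) : ℝ) * v ^ (-(1/2) : ℝ))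
        (Ioc 0 (u/2)) := by
      have : IntervalIntegrable (fun v : ℝ => v ^ (-(1/2) : ℝ)) volume 0 (u/2) :=
        intervalIntegral.intervalIntegrable_rpow' (by norm_num)
      rw [intervalIntegrable_iff_integrableOn_Ioc_of_le (by linarith)] at this
      exact this.const_mul _
    rw [← ofReal_integral_eq_lintegral_ofReal hInt
      ((ae_restrict_iff' measurableSet_Ioc).2 (ae_of_all _ (fun v hv => by
        have hv0 : (0:ℝ) < v := hv.1
        positivity)))]
    apply ENNReal.ofReal_le_ofReal
    rw [integral_const_mul]
    have hval : ∫ v in Ioc (0:ℝ) (u/2), v ^ (-(1/2) : ℝ) = 2 * (u/2) ^ (1/2:ℝ) := by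
      rw [← intervalIntegral.integral_of_le (by linarith)]
      rw [integral_rpow (Or.inl (by norm_num : (-1:ℝ) < -(1/2)))]
      rw [Real.zero_rpow (by norm_num)]
      norm_num
      ring
    rw [hval]
    have h3 : (u/2) ^ (1/2:ℝ) ≤ u ^ (1/2:ℝ) :=
      Real.rpow_le_rpow (by linarith) (by linarith) (by norm_num)
    have h4 : u ^ (-(3/2) : ℝ) * u ^ (1/2:ℝ) = 1/u := by
      rw [← Real.rpow_add hu0, (by norm_num : (-(3/2):ℝ) + 1/2 = -1), Real.rpow_neg_one,
        one_div]
    have h5 : 0 ≤ u ^ (-(3/2) : ℝ) := Real.rpow_nonneg hu0.le _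
    calc 64 * u ^ (-(3/2) : ℝ) * (2 * (u/2) ^ (1/2:ℝ))
        ≤ 64 * u ^ (-(3/2) : ℝ) * (2 * u ^ (1/2:ℝ)) := by nlinarith
      _ = 128 * (u ^ (-(3/2) : ℝ) * u ^ (1/2:ℝ)) := by ring
      _ = 128/u := by rw [h4]; ring
  -- Piece B
  have pieceB : ∫⁻ v in Ioo (u/2) (2*u), ENNReal.ofReal (k v) ≤ ENNReal.ofReal (24/u) := by
    have hbd : ∀ v ∈ Ioo (u/2) (2*u),
        ENNReal.ofReal (k v) ≤ ENNReal.ofReal (16/u^2) := by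
      intro v hv
      obtain ⟨hv1, hv2⟩ := hv
      have hv0 : (0:ℝ) < v := by linarith
      apply ENNReal.ofReal_le_ofReal
      by_cases hne : v = u
      · have hzero : k v = 0 := by rw [hne]; simp [hk]
        rw [hzero]; positivity
      have hw1 : 1/2 ≤ u/v := by rw [le_div_iff₀ hv0]; linarith
      have hw2 : u/v ≤ 2 := by rw [div_le_iff₀ hv0]; linarith
      have hlog : (Real.log (u/v))^2 ≤ 4 * (u/v - 1)^2 := aux_log_sq_near hw1 hw2
      have e1 : (u/v - 1)^2 = (u-v)^2/v^2 := by field_simp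
      have hne' : (u - v)^2 ≠ 0 := pow_ne_zero _ (sub_ne_zero.mpr (fun h => hne (by linarith [h] : v = u)))
      have hkb : k v ≤ 4/v^2 := by
        rw [hk]
        rw [div_le_iff₀ (lt_of_le_of_ne (sq_nonneg _) (Ne.symm hne'))]
        rw [e1] at hlog
        calc (Real.log (u/v))^2 ≤ 4 * ((u-v)^2/v^2) := hlog
          _ = 4/v^2 * (u-v)^2 := by ring
      refine hkb.trans ?_
      rw [div_le_div_iff₀ (by positivity) (by positivity)]
      nlinarith
    refine le_trans (setLIntegral_mono' measurableSet_Ioo hbd) ?_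
    rw [setLIntegral_const]
    rw [Real.volume_Ioo]
    rw [← ENNReal.ofReal_mul (by positivity)]
    apply ENNReal.ofReal_le_ofReal
    rcases le_or_gt (2*u - u/2) 0 with h | h
    · calc 16/u^2 * (2*u - u/2) ≤ 0 := by
            apply mul_nonpos_of_nonneg_of_nonpos (by positivity) h
        _ ≤ 24/u := by positivity
    · calc 16/u^2 * (2*u - u/2) = 24/u := by field_simp; ring
        _ ≤ 24/u := le_rfl
  -- Piece C
  have pieceC : ∫⁻ v in Icc (2*u) 2, ENNReal.ofReal (k v) ≤ ENNReal.ofReal (128/u) := by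
    have hbd : ∀ v ∈ Icc (2*u) (2:ℝ),
        ENNReal.ofReal (k v) ≤ ENNReal.ofReal (64 * u ^ (-(1/2) : ℝ) * v ^ (-(3/2) : ℝ)) := by
      intro v hv
      obtain ⟨hv1, hv2⟩ := hv
      have hv0 : (0:ℝ) < v := by linarith
      apply ENNReal.ofReal_le_ofReal
      have h1 : (1:ℝ) ≤ v/u := by rw [le_div_iff₀ hu0]; linarith
      have hlogsym : (Real.log (u/v))^2 = (Real.log (v/u))^2 := by
        rw [Real.log_div hu0.ne' hv0.ne', Real.log_div hv0.ne' hu0.ne']; ring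
      have hlog : (Real.log (v/u))^2 ≤ 16 * (v/u) ^ (1/2:ℝ) := aux_log_sq_le h1
      have hden : v^2/4 ≤ (u - v)^2 := by nlinarith
      have e1 : (v/u) ^ (1/2:ℝ) = v ^ (1/2:ℝ) * u ^ (-(1/2):ℝ) := by
        rw [Real.div_rpow hv0.le hu0.le, Real.rpow_neg hu0.le, div_eq_mul_inv]
      have hkb : k v ≤ (16 * (v/u) ^ (1/2:ℝ)) / (v^2/4) := by
        show (Real.log (u/v))^2 / (u - v)^2 ≤ _
        rw [hlogsym]
        apply div_le_div₀ (by positivity) hlog (by positivity) hden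
      refine hkb.trans (le_of_eq ?_)
      rw [e1]
      have e2 : v ^ (-(3/2) : ℝ) = v ^ (1/2:ℝ) / v^2 := by
        rw [← Real.rpow_natCast v 2, ← Real.rpow_sub hv0]; norm_num
      rw [e2]; field_simp; ring
    refine le_trans (setLIntegral_mono' measurableSet_Icc hbd) ?_
    have hsub : Icc (2*u) (2:ℝ) ⊆ Ioi u := by
      intro v hv; exact lt_of_lt_of_le (by linarith : u < 2*u) hv.1
    refine le_trans (lintegral_mono_set hsub) ?_
    have hInt : IntegrableOn (fun v : ℝ => 64 * u ^ (-(1/2) : ℝ) * v ^ (-(3/2) : ℝ))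
        (Ioi u) :=
      (integrableOn_Ioi_rpow_of_lt (by norm_num) hu0).const_mul _
    rw [← ofReal_integral_eq_lintegral_ofReal hInt
      ((ae_restrict_iff' measurableSet_Ioi).2 (ae_of_all _ (fun v hv => by
        have hv0 : (0:ℝ) < v := lt_trans hu0 hv
        positivity)))]
    apply ENNReal.ofReal_le_ofReal
    rw [integral_const_mul]
    rw [integral_Ioi_rpow_of_lt (by norm_num) hu0]
    have h4 : u ^ (-(1/2) : ℝ) * u ^ (-(1/2) : ℝ) = 1/u := by
      rw [← Real.rpow_add hu0, (by norm_num : (-(1/2):ℝ) + -(1/2) = -1), Real.rpow_neg_one,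
        one_div]
    rw [(by norm_num : ((-(3/2):ℝ)) + 1 = -(1/2)),
      (show 64 * u ^ (-(1/2) : ℝ) * (-(u ^ (-(1/2):ℝ)) / (-(1/2):ℝ))
          = 128 * (u ^ (-(1/2):ℝ) * u ^ (-(1/2):ℝ)) from by ring), h4,
      (show (128:ℝ) * (1/u) = 128/u from by ring)]
  calc ∫⁻ v in Ioo (0:ℝ) 2, ENNReal.ofReal (k v)
      ≤ _ := step1
    _ ≤ ENNReal.ofReal (128/u) + ENNReal.ofReal (24/u) + ENNReal.ofReal (128/u) :=
        add_le_add (add_le_add pieceA pieceB) pieceC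
    _ = ENNReal.ofReal (128/u + 24/u + 128/u) := by
        rw [← ENNReal.ofReal_add (by positivity) (by positivity),
          ← ENNReal.ofReal_add (by positivity) (by positivity)]
    _ ≤ ENNReal.ofReal (300/u) := by
        apply ENNReal.ofReal_le_ofReal
        rw [← add_div, ← add_div]
        gcongr
        norm_num

lemma aux_outer (α : ℝ) (hα : α ∈ Set.Ioo (0:ℝ) (1/2)) :
    IntegrableOn (fun x : ℝ => (Real.log (6/x)) ^ (2*α - 2) * (1/x)) (Ioc 0 2) := by
  obtain ⟨hα0, hα2⟩ := hα
  set g : ℝ → ℝ := fun x => (Real.log (6/x)) ^ (2*α - 2) * (1/x) with hg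
  set Φ : ℝ → ℝ := fun x => (Real.log (6/x)) ^ (2*α-1) * (1/(1 - 2*α)) with hΦ
  have h12 : (0:ℝ) < 1 - 2*α := by linarith
  have hD : ∀ x : ℝ, 0 < x → x ≤ 2 → HasDerivAt Φ (g x) x := by
    intro x hx0 hx2
    have h6x : (0:ℝ) < 6/x := by positivity
    have hL1 : 1 ≤ Real.log (6/x) := aux_L_ge_one hx0 hx2
    have h1 : HasDerivAt (fun x : ℝ => 6/x) (-6/x^2) x := by
      have := (hasDerivAt_inv hx0.ne').const_mul (6:ℝ)
      simp only [div_eq_mul_inv]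
      rw [show (-6 * (x^2)⁻¹ : ℝ) = 6 * -(x^2)⁻¹ by ring]
      exact this
    have h2 : HasDerivAt (fun x : ℝ => Real.log (6/x)) (-1/x) x := by
      have := h1.log (ne_of_gt h6x)
      have e : -6/x^2 / (6/x) = -1/x := by field_simp
      rwa [e] at this
    have h3 := (h2.rpow_const (p := 2*α-1) (Or.inl (by linarith))).mul_const (1/(1-2*α))
    have e2 : 2*α-1-1 = 2*α-2 := by ring
    rw [e2] at h3
    have e3 : -1/x * (2*α-1) * Real.log (6/x) ^ (2*α-2) * (1/(1-2*α)) = g x := by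
      rw [hg]
      field_simp
      ring
    rwa [e3] at h3
  have hgc : ∀ c : ℝ, 0 < c → ContinuousOn g (Icc c 2) := by
    intro c hc
    have hx0 : ∀ x ∈ Icc c 2, (0:ℝ) < x := fun x hx => lt_of_lt_of_le hc hx.1
    apply ContinuousOn.mul
    · apply ContinuousOn.rpow_const
      · apply ContinuousOn.log
        · exact continuousOn_const.div continuousOn_id (fun x hx => (hx0 x hx).ne')
        · intro x hx
          have := hx0 x hx
          positivity
      · intro x hx
        left
        have := aux_L_ge_one (hx0 x hx) hx.2
        linarith
    · exact continuousOn_const.div continuousOn_id (fun x hx => (hx0 x hx).ne')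
  have ha0 : ∀ i : ℕ, (0:ℝ) < 1/(i+1) := fun i => by positivity
  have ha2 : ∀ i : ℕ, (1:ℝ)/(i+1) ≤ 2 := fun i => by
    rw [div_le_iff₀ (by positivity)]
    have : (1:ℝ) ≤ i+1 := by exact_mod_cast Nat.one_le_iff_ne_zero.mpr (Nat.succ_ne_zero i)
    linarith
  have hfi : ∀ i : ℕ, IntegrableOn g (Ioc (1/(i+1:ℝ)) 2) := by
    intro i
    exact ((hgc _ (ha0 i)).integrableOn_Icc).mono_set Ioc_subset_Icc_self
  apply integrableOn_Ioc_of_intervalIntegral_norm_bounded_left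
    (I := Φ 2) (a := fun i : ℕ => 1/(i+1:ℝ)) (l := Filter.atTop) hfi
    tendsto_one_div_add_atTop_nhds_zero_nat
  apply Filter.Eventually.of_forall
  intro i
  have hnorm : ∫ x in Ioc (1/(i+1:ℝ)) 2, ‖g x‖ = ∫ x in Ioc (1/(i+1:ℝ)) 2, g x := by
    apply setIntegral_congr_fun measurableSet_Ioc
    intro x hx
    have hx0 : (0:ℝ) < x := lt_trans (ha0 i) hx.1
    have hL1 := aux_L_ge_one hx0 hx.2
    have hnn : 0 ≤ g x := by
      simp only [hg]
      have : (0:ℝ) ≤ Real.log (6/x) ^ (2*α-2) := Real.rpow_nonneg (by linarith) _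
      positivity
    show ‖g x‖ = g x
    rw [Real.norm_eq_abs, abs_of_nonneg hnn]
  rw [hnorm, ← intervalIntegral.integral_of_le (ha2 i)]
  rw [intervalIntegral.integral_eq_sub_of_hasDerivAt
    (f := Φ) (f' := g) (fun x hx => by
      rw [uIcc_of_le (ha2 i)] at hx
      exact hD x (lt_of_lt_of_le (ha0 i) hx.1) hx.2)
    (((hgc _ (ha0 i)).mono (by rw [uIcc_of_le (ha2 i)])).intervalIntegrable)]
  have hΦnn : 0 ≤ Φ (1/(i+1:ℝ)) := by
    rw [hΦ]
    have := aux_L_ge_one (ha0 i) (ha2 i)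
    have h1 : (0:ℝ) ≤ Real.log (6/(1/(i+1:ℝ))) ^ (2*α-1) := Real.rpow_nonneg (by linarith) _
    positivity
  linarith

lemma aux_fin (α : ℝ) (hα : α ∈ Set.Ioo (0:ℝ) (1/2)) :
    ∫⁻ x in Ioo (0:ℝ) 2,
      ENNReal.ofReal ((α * (Real.log (6/x))^(α-1))^2 * (300/x)) < ⊤ := by
  have hInt2 : IntegrableOn
      (fun x : ℝ => (300*α^2) * ((Real.log (6/x)) ^ (2*α - 2) * (1/x))) (Ioc 0 2) :=
    (aux_outer α hα).const_mul _
  have heq : ∀ x ∈ Ioo (0:ℝ) 2,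
      ENNReal.ofReal ((α * (Real.log (6/x))^(α-1))^2 * (300/x))
        = ENNReal.ofReal ((300*α^2) * ((Real.log (6/x)) ^ (2*α-2) * (1/x))) := by
    intro x hx
    congr 1
    have hL : (0:ℝ) < Real.log (6/x) := lt_of_lt_of_le one_pos (aux_L_ge_one hx.1 hx.2.le)
    have h2 : ((Real.log (6/x))^(α-1))^2 = (Real.log (6/x))^(2*α-2) := by
      rw [← Real.rpow_natCast ((Real.log (6/x))^(α-1)) 2, ← Real.rpow_mul hL.le,
        (show (α-1)*((2:ℕ):ℝ) = 2*α-2 from by push_cast; ring)]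
    rw [mul_pow, h2]
    ring
  rw [setLIntegral_congr_fun measurableSet_Ioo heq]
  calc ∫⁻ x in Ioo (0:ℝ) 2,
        ENNReal.ofReal ((300*α^2) * ((Real.log (6/x)) ^ (2*α-2) * (1/x)))
      ≤ ∫⁻ x in Ioc (0:ℝ) 2,
        ENNReal.ofReal ((300*α^2) * ((Real.log (6/x)) ^ (2*α-2) * (1/x))) :=
        lintegral_mono_set Ioo_subset_Ioc_self
    _ < ⊤ := hInt2.lintegral_lt_top

/-- For `α ∈ (0, 1/2)` and `f x = -(log (6/x))^α`, the Gagliardo `H^{1/2}`-seminorm of `f`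
on `(0,2)` is finite: `∫₀² ∫₀² (f x - f y)² / (x - y)² dx dy < ∞`. -/
theorem gagliardo_half_seminorm_finite
    (α : ℝ) (hα : α ∈ Set.Ioo (0 : ℝ) (1/2))
    (f : ℝ → ℝ) (hf : ∀ x, f x = -(Real.log (6 / x)) ^ α) :
    ∫⁻ q in (Set.Ioo (0 : ℝ) 2) ×ˢ (Set.Ioo (0 : ℝ) 2),
      ENNReal.ofReal ((f q.1 - f q.2) ^ 2 / (q.1 - q.2) ^ 2) < ⊤ := by
  set s : Set ℝ := Set.Ioo (0:ℝ) 2 with hs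
  set A : ℝ → ℝ := fun x => α * (Real.log (6/x))^(α-1) with hA
  set K : ℝ → ℝ → ℝ := fun u v => (Real.log (u/v))^2/(u-v)^2 with hK
  have hmeasL : Measurable (fun x : ℝ => Real.log (6/x)) :=
    Real.measurable_log.comp (measurable_const.div measurable_id)
  have hmeasA : Measurable A := (hmeasL.pow_const (α-1)).const_mul α
  have hmeasK : Measurable (fun q : ℝ × ℝ => K q.1 q.2) := by
    apply Measurable.div
    · exact (Real.measurable_log.comp (measurable_fst.div measurable_snd)).pow_const 2
    · exact (measurable_fst.sub measurable_snd).pow_const 2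
  have hmeasT1 : Measurable (fun q : ℝ × ℝ => ENNReal.ofReal ((A q.1)^2 * K q.1 q.2)) :=
    (((hmeasA.comp measurable_fst).pow_const 2).mul hmeasK).ennreal_ofReal
  have hmeasT2 : Measurable (fun q : ℝ × ℝ => ENNReal.ofReal ((A q.2)^2 * K q.1 q.2)) :=
    (((hmeasA.comp measurable_snd).pow_const 2).mul hmeasK).ennreal_ofReal
  have hmeasB : Measurable (fun x : ℝ => ENNReal.ofReal ((A x)^2 * (300/x))) :=
    ((hmeasA.pow_const 2).mul (measurable_const.div measurable_id)).ennreal_ofReal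
  have hprod : (volume : Measure (ℝ×ℝ)).restrict (s ×ˢ s)
      = (volume.restrict s).prod (volume.restrict s) := by
    rw [Measure.volume_eq_prod, Measure.prod_restrict]
  have step1 : ∫⁻ q in s ×ˢ s, ENNReal.ofReal ((f q.1 - f q.2) ^ 2 / (q.1 - q.2) ^ 2)
      ≤ ∫⁻ q in s ×ˢ s, (ENNReal.ofReal ((A q.1)^2 * K q.1 q.2)
          + ENNReal.ofReal ((A q.2)^2 * K q.1 q.2)) := by
    apply setLIntegral_mono (hmeasT1.add hmeasT2)
    rintro ⟨x, y⟩ ⟨hx, hy⟩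
    simp only [hf]
    have hkey := aux_key α hα hx hy
    calc ENNReal.ofReal (((-(Real.log (6/x))^α) - (-(Real.log (6/y))^α))^2/(x-y)^2)
        ≤ ENNReal.ofReal ((A x)^2 * K x y + (A y)^2 * K x y) :=
          ENNReal.ofReal_le_ofReal hkey
      _ = _ := ENNReal.ofReal_add (by positivity) (by positivity)
  have hinner : ∀ u ∈ s, ∀ (c : ℝ),
      (∫⁻ v in s, ENNReal.ofReal (c^2 * K u v)) ≤ ENNReal.ofReal (c^2 * (300/u)) := by
    intro u hu c
    calc ∫⁻ v in s, ENNReal.ofReal (c^2 * K u v)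
        = ∫⁻ v in s, ENNReal.ofReal (c^2) * ENNReal.ofReal (K u v) :=
          lintegral_congr (fun v => ENNReal.ofReal_mul (sq_nonneg _))
      _ = ENNReal.ofReal (c^2) * ∫⁻ v in s, ENNReal.ofReal (K u v) :=
          lintegral_const_mul' _ _ ENNReal.ofReal_ne_top
      _ ≤ ENNReal.ofReal (c^2) * ENNReal.ofReal (300/u) :=
          mul_le_mul' le_rfl (aux_inner hu)
      _ = ENNReal.ofReal (c^2 * (300/u)) := (ENNReal.ofReal_mul (sq_nonneg _)).symm
  have T1 : ∫⁻ q in s ×ˢ s, ENNReal.ofReal ((A q.1)^2 * K q.1 q.2) < ⊤ := by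
    rw [hprod, lintegral_prod _ hmeasT1.aemeasurable]
    calc ∫⁻ x in s, ∫⁻ y in s, ENNReal.ofReal ((A x)^2 * K x y)
        ≤ ∫⁻ x in s, ENNReal.ofReal ((A x)^2 * (300/x)) :=
          setLIntegral_mono hmeasB (fun x hx => hinner x hx (A x))
      _ < ⊤ := aux_fin α hα
  have T2 : ∫⁻ q in s ×ˢ s, ENNReal.ofReal ((A q.2)^2 * K q.1 q.2) < ⊤ := by
    rw [hprod, lintegral_prod_symm _ hmeasT2.aemeasurable]
    have hswap : ∀ y ∈ s, (∫⁻ x in s, ENNReal.ofReal ((A y)^2 * K x y))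
        ≤ ENNReal.ofReal ((A y)^2 * (300/y)) := by
      intro y hy
      have hxeq : ∀ x ∈ s, ENNReal.ofReal ((A y)^2 * K x y)
          = ENNReal.ofReal ((A y)^2 * K y x) := by
        intro x hx
        have hKsym : K x y = K y x := by
          simp only [hK]
          rw [Real.log_div hx.1.ne' hy.1.ne', Real.log_div hy.1.ne' hx.1.ne']
          ring
        rw [hKsym]
      rw [setLIntegral_congr_fun measurableSet_Ioo hxeq]
      exact hinner y hy (A y)
    calc ∫⁻ y in s, ∫⁻ x in s, ENNReal.ofReal ((A y)^2 * K x y)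
        ≤ ∫⁻ y in s, ENNReal.ofReal ((A y)^2 * (300/y)) :=
          setLIntegral_mono hmeasB hswap
      _ < ⊤ := aux_fin α hα
  refine lt_of_le_of_lt step1 ?_
  rw [lintegral_add_left hmeasT1]
  exact ENNReal.add_lt_top.mpr ⟨T1, T2⟩
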